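/- Let (R, 𝔪) be a Noetherian local ring of dimension d, and let a, x₂, …, x_d be a system of parameters of R. Let S = R(a^{1/2}) = R[X]/(X² - a) with maximal ideal 𝔫, and let α ∈ S be the class of X (a square root of a). Then α, x₂, …, x_d is a system of parameters for S. -/

import Mathlib

open Polynomial

section Dim

variable (R S : Type*) [CommRing R] [CommRing S] [Algebra R S] [Algebra.IsIntegral R S]

lemma ringKrullDim_le_of_isIntegral : ringKrullDim S ≤ ringKrullDim R := by
  refine Order.krullDim_le_of_strictMono
    (fun p : PrimeSpectrum S => ⟨p.asIdeal.comap (algebraMap R S), by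
      haveI := p.2; infer_instance⟩) ?_
  intro p q hpq
  have h : p.asIdeal < q.asIdeal := hpq
  obtain ⟨x, hxq, hxp⟩ := SetLike.exists_of_lt h
  haveI := p.2
  exact Ideal.comap_lt_comap_of_integral_mem_sdiff (le_of_lt h) ⟨hxq, hxp⟩
    (Algebra.IsIntegral.isIntegral x)

lemma le_ringKrullDim_of_isIntegral (hinj : Function.Injective (algebraMap R S)) :
    ringKrullDim R ≤ ringKrullDim S := by
  have key : ∀ (n : ℕ) (c : LTSeries (PrimeSpectrum R)), c.length = n →
      ∃ c' : LTSeries (PrimeSpectrum S), c'.length = c.length ∧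
        c'.last.asIdeal.comap (algebraMap R S) = c.last.asIdeal := by
    intro n
    induction n with
    | zero =>
      intro c hc
      haveI := c.last.2
      obtain ⟨Q, -, hQp, hQc⟩ := Ideal.exists_ideal_over_prime_of_isIntegral
        c.last.asIdeal ⊥ (by
          rw [← RingHom.ker_eq_comap_bot (algebraMap R S),
            (RingHom.injective_iff_ker_eq_bot _).1 hinj]
          exact bot_le)
      exact ⟨⟨0, fun _ => ⟨Q, hQp⟩, fun i => i.elim0⟩, hc.symm, hQc⟩
    | succ n ih =>
      intro c hc
      have hne : c.length ≠ 0 := by omega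
      obtain ⟨c', hlen, hlast⟩ := ih c.eraseLast (by rw [RelSeries.eraseLast_length, hc]; omega)
      haveI := c.last.2
      have hlt : c.eraseLast.last < c.last := c.eraseLast_last_rel_last hne
      obtain ⟨Q, hQge, hQp, hQc⟩ := Ideal.exists_ideal_over_prime_of_isIntegral
        c.last.asIdeal c'.last.asIdeal (by rw [hlast]; exact le_of_lt hlt)
      have hQlt : c'.last < (⟨Q, hQp⟩ : PrimeSpectrum S) := by
        refine lt_of_le_of_ne hQge fun h => ne_of_lt hlt (PrimeSpectrum.ext ?_)
        rw [← hlast, h, hQc]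
      refine ⟨c'.snoc ⟨Q, hQp⟩ hQlt, ?_, by simp [hQc]⟩
      show c'.length + 1 = c.length
      rw [hlen, RelSeries.eraseLast_length, hc]; omega
  rw [ringKrullDim, ringKrullDim, Order.krullDim, Order.krullDim]
  refine iSup_le fun c => ?_
  obtain ⟨c', hlen, -⟩ := key c.length c rfl
  rw [← hlen]
  exact le_iSup (fun p : LTSeries (PrimeSpectrum S) => (p.length : WithBot ℕ∞)) c'

end Dim

/-- A system of parameters of a local ring: `d` elements whose span has radical the
maximal ideal, where `d` is the Krull dimension. -/
def IsSystemOfParameters (R : Type*) [CommRing R] [IsLocalRing R] {d : ℕ}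
    (x : Fin d → R) : Prop :=
  ringKrullDim R = d ∧ (Ideal.span (Set.range x)).radical = IsLocalRing.maximalIdeal R

/-- Let `(R, 𝔪)` be Noetherian local of dimension `d` and let
`a = y 0, y 1, …, y (d-1)` be a system of parameters of `R`.  In `S = R[X]/(X² - a)`,
the class `α` of `X` (a square root of `a`) together with `y 1, …, y (d-1)` is a system
of parameters of `S`. -/
theorem stmt_3 (R : Type*) [CommRing R] [IsNoetherianRing R] [IsLocalRing R]
    (d : ℕ) (hd : 0 < d) (y : Fin d → R) (hy : IsSystemOfParameters R y)
    (ha : y ⟨0, hd⟩ ∈ IsLocalRing.maximalIdeal R) :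
    ∃ _ : IsLocalRing (R[X] ⧸ Ideal.span {(X : R[X]) ^ 2 - C (y ⟨0, hd⟩)}),
      IsSystemOfParameters (R[X] ⧸ Ideal.span {(X : R[X]) ^ 2 - C (y ⟨0, hd⟩)})
        (fun i : Fin d =>
          if i = ⟨0, hd⟩ then Ideal.Quotient.mk _ (X : R[X])
          else Ideal.Quotient.mk _ (C (y i))) := by
  classical
  set a : R := y ⟨0, hd⟩ with ha_def
  set f : R[X] := X ^ 2 - C a with hf_def
  have hmonic : f.Monic := monic_X_pow_sub_C a two_ne_zero
  set I : Ideal R[X] := Ideal.span {f} with hI_def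
  set S := R[X] ⧸ I with hS_def
  set mk : R[X] →+* S := Ideal.Quotient.mk I with hmk_def
  set ξ : S := mk X with hξ_def
  have hfmem : f ∈ I := Ideal.subset_span rfl
  have hmkf : mk f = 0 := Ideal.Quotient.eq_zero_iff_mem.2 hfmem
  have hξsq : ξ ^ 2 = mk (C a) := by
    have h : mk (X ^ 2) - mk (C a) = 0 := by rw [← map_sub]; exact hmkf
    rw [hξ_def, ← map_pow]
    exact sub_eq_zero.mp h
  have hdeg : f.degree = 2 := by
    rw [hf_def]
    exact_mod_cast degree_X_pow_sub_C (by norm_num) a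
  -- algebra structure
  have halg : ∀ r : R, algebraMap R S r = mk (C r) := fun r => rfl
  -- decomposition of elements
  have decomp : ∀ z : S, ∃ r s : R, z = mk (C r) + mk (C s) * ξ := by
    intro z
    obtain ⟨p, rfl⟩ := Ideal.Quotient.mk_surjective z
    refine ⟨(p %ₘ f).coeff 0, (p %ₘ f).coeff 1, ?_⟩
    have h1 : mk p = mk (p %ₘ f) := by
      conv_lhs => rw [← modByMonic_add_div p f]
      rw [map_add, map_mul, hmkf, zero_mul, add_zero]
    have h2 : (p %ₘ f).degree ≤ 1 := by
      have hlt := degree_modByMonic_lt p hmonic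
      rw [hdeg] at hlt
      exact Order.le_of_lt_succ (by exact_mod_cast hlt)
    have h3 : p %ₘ f = C ((p %ₘ f).coeff 1) * X + C ((p %ₘ f).coeff 0) :=
      eq_X_add_C_of_degree_le_one h2
    rw [show (Ideal.Quotient.mk I) p = mk p from rfl, h1]
    conv_lhs => rw [h3]
    rw [map_add, map_mul]
    ring
  -- units
  have hunit : ∀ r s : R, r ∉ IsLocalRing.maximalIdeal R →
      IsUnit (mk (C r) + mk (C s) * ξ) := by
    intro r s hr
    have hpoly : ((C r : R[X]) + C s * X) * (C r - C s * X)
        = C (r * r - s * s * a) - C (s * s) * f := by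
      rw [hf_def]
      simp only [map_sub, map_mul]
      ring
    have key : (mk (C r) + mk (C s) * ξ) * (mk (C r) - mk (C s) * ξ)
        = mk (C (r * r - s * s * a)) := by
      rw [hξ_def, ← map_mul, ← map_add, ← map_sub, ← map_mul, hpoly,
        map_sub, map_mul, hmkf, mul_zero, sub_zero]
    have hu : IsUnit (r * r - s * s * a) := by
      by_contra hnu
      have hm : r * r - s * s * a ∈ IsLocalRing.maximalIdeal R := hnu
      have : r * r ∈ IsLocalRing.maximalIdeal R := by
        have := (IsLocalRing.maximalIdeal R).add_mem hm
          ((IsLocalRing.maximalIdeal R).mul_mem_left (s * s) ha)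
        simpa using this
      rcases (IsLocalRing.maximalIdeal.isMaximal R).isPrime.mem_or_mem this with h | h
      · exact hr h
      · exact hr h
    have hu2 : IsUnit (mk (C (r * r - s * s * a))) := hu.map (mk.comp Polynomial.C)
    exact isUnit_of_mul_isUnit_left (key ▸ hu2)
  -- the candidate maximal ideal
  set N : Ideal S := (IsLocalRing.maximalIdeal R).map (mk.comp Polynomial.C)
      ⊔ Ideal.span {ξ} with hN_def
  have hmemN_C : ∀ m ∈ IsLocalRing.maximalIdeal R, mk (C m) ∈ N := fun m hm =>
    Ideal.mem_sup_left (Ideal.mem_map_of_mem _ hm)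
  have hξN : ξ ∈ N := Ideal.mem_sup_right (Ideal.subset_span rfl)
  -- the residue map
  set φ₀ : R[X] →+* R ⧸ IsLocalRing.maximalIdeal R :=
    (Ideal.Quotient.mk (IsLocalRing.maximalIdeal R)).comp (evalRingHom (0 : R)) with hφ₀_def
  have hφ₀f : φ₀ f = 0 := by
    rw [hφ₀_def, hf_def]
    simp only [RingHom.comp_apply, coe_evalRingHom, eval_sub, eval_pow, eval_X, eval_C]
    simp only [ne_eq, OfNat.ofNat_ne_zero, not_false_eq_true, zero_pow, zero_sub, map_neg,
      neg_eq_zero]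
    exact Ideal.Quotient.eq_zero_iff_mem.2 ha
  set φ : S →+* R ⧸ IsLocalRing.maximalIdeal R :=
    Ideal.Quotient.lift I φ₀ (by
      intro p hp
      rw [hI_def, Ideal.mem_span_singleton] at hp
      obtain ⟨q, rfl⟩ := hp
      rw [map_mul, hφ₀f, zero_mul]) with hφ_def
  have hφmk : ∀ p : R[X], φ (mk p) = φ₀ p := fun p => Ideal.Quotient.lift_mk I _ _
  haveI : Nontrivial (R ⧸ IsLocalRing.maximalIdeal R) :=
    Ideal.Quotient.nontrivial_iff.mpr (IsLocalRing.maximalIdeal.isMaximal R).ne_top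
  have hNone : (1 : S) ∉ N := by
    intro h1
    have hφN : N ≤ RingHom.ker φ := by
      rw [hN_def]
      refine sup_le (Ideal.map_le_iff_le_comap.2 fun m hm => ?_)
        ((Ideal.span_le).2 ?_)
      · show φ (mk (C m)) = 0
        rw [hφmk, hφ₀_def]
        simp only [RingHom.comp_apply, coe_evalRingHom, eval_C]
        exact Ideal.Quotient.eq_zero_iff_mem.2 hm
      · intro z hz
        rw [Set.mem_singleton_iff] at hz
        subst hz
        show φ (mk X) = 0
        rw [hφmk, hφ₀_def]
        simp
    have : φ 1 = 0 := hφN h1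
    rw [map_one] at this
    exact one_ne_zero this
  haveI hSnt : Nontrivial S :=
    nontrivial_of_ne 1 0 (fun h => hNone (h ▸ N.zero_mem))
  have hnonunits : ∀ z : S, z ∈ nonunits S ↔ z ∈ N := by
    intro z
    constructor
    · intro hz
      by_contra hzN
      obtain ⟨r, s, rfl⟩ := decomp z
      have hr : r ∉ IsLocalRing.maximalIdeal R := by
        intro hr
        exact hzN (N.add_mem (hmemN_C r hr) (N.mul_mem_left (mk (C s)) hξN))
      exact hz (hunit r s hr)
    · intro hz hu
      exact hNone (Ideal.eq_top_of_isUnit_mem N hz hu ▸ Submodule.mem_top)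
  haveI hLocal : IsLocalRing S := IsLocalRing.of_nonunits_add (fun p q hp hq =>
    (hnonunits _).2 (N.add_mem ((hnonunits _).1 hp) ((hnonunits _).1 hq)))
  have hmax : IsLocalRing.maximalIdeal S = N :=
    Ideal.ext fun z => (IsLocalRing.mem_maximalIdeal z).trans (hnonunits z)
  -- the span of the new system
  set J : Ideal S := Ideal.span (Set.range fun i : Fin d =>
    if i = ⟨0, hd⟩ then mk X else mk (C (y i))) with hJ_def
  have hξJ : ξ ∈ J := Ideal.subset_span ⟨⟨0, hd⟩, by simp [hξ_def]⟩
  have hyJ : ∀ i : Fin d, mk (C (y i)) ∈ J := by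
    intro i
    by_cases hi : i = ⟨0, hd⟩
    · subst hi
      rw [← ha_def, ← hξsq, sq]
      exact J.mul_mem_left ξ hξJ
    · exact Ideal.subset_span ⟨i, by simp [hi]⟩
  have hy_m : ∀ i : Fin d, y i ∈ IsLocalRing.maximalIdeal R := fun i =>
    hy.2 ▸ Ideal.le_radical (Ideal.subset_span (Set.mem_range_self i))
  have hJrad : J.radical = IsLocalRing.maximalIdeal S := by
    rw [hmax]
    refine le_antisymm ?_ ?_
    · have hJN : J ≤ N := by
        rw [hJ_def]
        refine Ideal.span_le.2 ?_
        rintro z ⟨i, rfl⟩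
        show (if i = ⟨0, hd⟩ then mk X else mk (C (y i))) ∈ N
        by_cases hi : i = ⟨0, hd⟩
        · rw [if_pos hi]; exact hξN
        · rw [if_neg hi]; exact hmemN_C (y i) (hy_m i)
      have hNp : N.IsPrime := by
        rw [← hmax]; exact (IsLocalRing.maximalIdeal.isMaximal S).isPrime
      exact (Ideal.radical_mono hJN).trans (le_of_eq hNp.radical)
    · rw [hN_def]
      refine sup_le (Ideal.map_le_iff_le_comap.2 fun m hm => ?_)
        (Ideal.span_le.2 fun z hz => by
          rw [Set.mem_singleton_iff] at hz
          exact hz ▸ Ideal.le_radical hξJ)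
      -- m ∈ 𝔪 implies mk (C m) ∈ J.radical
      show mk (C m) ∈ J.radical
      rw [← hy.2] at hm
      obtain ⟨n, hn⟩ := hm
      have hmap : (Ideal.span (Set.range y)).map (mk.comp Polynomial.C) ≤ J := by
        rw [Ideal.map_span]
        refine Ideal.span_le.2 ?_
        rintro z ⟨w, ⟨i, rfl⟩, rfl⟩
        exact hyJ i
      refine ⟨n, ?_⟩
      have : (mk.comp Polynomial.C) (m ^ n) ∈
          (Ideal.span (Set.range y)).map (mk.comp Polynomial.C) :=
        Ideal.mem_map_of_mem _ hn
      simpa [map_pow] using hmap this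
  -- dimension
  have halgEq : algebraMap R S = mk.comp Polynomial.C := RingHom.ext halg
  have hξint : IsIntegral R ξ := ⟨f, hmonic, by
    rw [halgEq, hξ_def, ← Polynomial.hom_eval₂, Polynomial.eval₂_C_X]
    exact hmkf⟩
  haveI : Algebra.IsIntegral R S := ⟨fun z => by
    obtain ⟨r, s, rfl⟩ := decomp z
    have h1 : IsIntegral R (mk (C r)) := isIntegral_algebraMap
    have h2 : IsIntegral R (mk (C s)) := isIntegral_algebraMap
    exact h1.add (h2.mul hξint)⟩
  have hinj : Function.Injective (algebraMap R S) := by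
    intro r s hrs
    have h : mk (C (r - s)) = 0 := by
      have hrs' : mk (C r) = mk (C s) := by rw [← halg r, ← halg s, hrs]
      rw [map_sub, map_sub, hrs', sub_self]
    rw [hmk_def, Ideal.Quotient.eq_zero_iff_mem, hI_def, Ideal.mem_span_singleton] at h
    obtain ⟨q, hq⟩ := h
    rcases eq_or_ne q 0 with rfl | hq0
    · rw [mul_zero] at hq
      have : r - s = 0 := by
        have := congrArg (fun p : R[X] => p.coeff 0) hq
        simpa using this
      exact sub_eq_zero.mp this
    · exfalso
      have hdq : (f * q).degree = q.degree + 2 := by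
        rw [mul_comm, hmonic.degree_mul, hdeg]
      have h2le : (2 : WithBot ℕ) ≤ (f * q).degree := by
        rw [hdq]
        exact le_add_of_nonneg_left (zero_le_degree_iff.2 hq0)
      have h0 : (f * q).degree ≤ 0 := hq ▸ degree_C_le
      exact absurd (h2le.trans h0) (by norm_num)
  have hdimRS : ringKrullDim S = ringKrullDim R :=
    le_antisymm (ringKrullDim_le_of_isIntegral R S) (le_ringKrullDim_of_isIntegral R S hinj)
  refine ⟨hLocal, ?_, ?_⟩
  · rw [hdimRS]
    exact hy.1
  · exact hJrad
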